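/- Let α ≥ 1, 0 ≤ β < α, let γ be an arithmetic function and γ̃(n) := ∑_{d|n} γ(d). With s^{(−1)}_{n,k} := ∑_{d|n} ([q^{d−k}] 1/C(q))·γ(n/d) and B_k := [q^k] C(q)·∑_{d≥1} a(d) q^{αd+β}/(1−q^{αd+β}), we have for all n ≥ 1: ∑_{k=1}^n s^{(−1)}_{n,k} B_k = ∑_{d | n, d ≡ β (mod α), d > β} a((d−β)/α) · γ̃(n/d). -/

import Mathlib

open PowerSeries Finset

lemma geom_inv_aux (m : ℕ) (hm : 1 ≤ m) :
    ((1 : PowerSeries ℂ) - (X : PowerSeries ℂ) ^ m)⁻¹ =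
      PowerSeries.mk (fun j => if m ∣ j then (1 : ℂ) else 0) := by
  rw [PowerSeries.inv_eq_iff_mul_eq_one]
  · ext j
    rw [mul_sub, mul_one, map_sub, PowerSeries.coeff_mul_X_pow']
    rcases Nat.eq_zero_or_pos j with rfl | hj
    · rw [if_neg (by omega), sub_zero, PowerSeries.coeff_mk, if_pos (dvd_zero m)]
      simp
    · rw [PowerSeries.coeff_one, if_neg hj.ne', PowerSeries.coeff_mk]
      by_cases h : m ≤ j
      · rw [if_pos h, PowerSeries.coeff_mk]
        have hiff : m ∣ j ↔ m ∣ j - m := by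
          constructor
          · exact fun hd => Nat.dvd_sub hd dvd_rfl
          · intro hd
            have := Nat.dvd_add hd (dvd_refl m)
            rwa [Nat.sub_add_cancel h] at this
        by_cases hd : m ∣ j
        · rw [if_pos hd, if_pos (hiff.mp hd), sub_self]
        · rw [if_neg hd, if_neg (fun h2 => hd (hiff.mpr h2)), sub_zero]
      · rw [if_neg h, sub_zero, if_neg]
        intro hd
        exact h (Nat.le_of_dvd hj hd)
  · have : constantCoeff ((X : PowerSeries ℂ) ^ m) = 0 := by
      rw [map_pow, PowerSeries.constantCoeff_X, zero_pow (by omega)]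
    rw [map_sub, this, map_one, sub_zero]
    exact one_ne_zero

lemma coeff_geom_aux (m j : ℕ) (hm : 1 ≤ m) :
    PowerSeries.coeff j ((X : PowerSeries ℂ) ^ m * (1 - (X : PowerSeries ℂ) ^ m)⁻¹) =
      if m ∣ j ∧ 1 ≤ j then 1 else 0 := by
  rw [geom_inv_aux m hm, PowerSeries.coeff_X_pow_mul', PowerSeries.coeff_mk]
  by_cases h : m ≤ j
  · rw [if_pos h]
    have hiff : m ∣ j - m ↔ m ∣ j := by
      constructor
      · intro hd
        have := Nat.dvd_add hd (dvd_refl m)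
        rwa [Nat.sub_add_cancel h] at this
      · exact fun hd => Nat.dvd_sub hd dvd_rfl
    by_cases hd : m ∣ j
    · rw [if_pos (hiff.mpr hd), if_pos ⟨hd, hm.trans h⟩]
    · rw [if_neg (fun h2 => hd (hiff.mp h2)), if_neg (fun h2 => hd h2.1)]
  · rw [if_neg h, eq_comm, if_neg]
    rintro ⟨hd, hj⟩
    exact h (Nat.le_of_dvd hj hd)

/-- Theorem 2: with `s⁻¹_{n,k} = ∑_{d∣n} ([q^{d−k}] 1/C(q)) γ(n/d)` and
`B_k = [q^k] C(q) ∑_{d≥1} a(d) q^{αd+β}/(1−q^{αd+β})` (terms with d > k do not contribute),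
we have `∑_{k=1}^n s⁻¹_{n,k} B_k = ∑_{d∣n, d ≡ β (mod α), d > β} a((d−β)/α) γ̃(n/d)`
where `γ̃(m) = ∑_{e∣m} γ(e)`. -/
theorem theorem2_generalized_factorization
    (C : PowerSeries ℂ) (hC : constantCoeff C = 1) (a γ : ℕ → ℂ) (α β : ℕ)
    (hα : 1 ≤ α) (hβ : β < α)
    (γt : ℕ → ℂ) (hγt : ∀ m, γt m = ∑ e ∈ m.divisors, γ e)
    (sInv : ℕ → ℕ → ℂ)
    (hsInv : ∀ n k, sInv n k =
      ∑ d ∈ n.divisors, (if k ≤ d then (PowerSeries.coeff (d - k)) C⁻¹ else 0) * γ (n / d))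
    (B : ℕ → ℂ)
    (hB : ∀ k, B k =
      (PowerSeries.coeff k)
        (C * ∑ d ∈ Finset.Icc 1 k,
          a d • ((X : PowerSeries ℂ) ^ (α * d + β) * (1 - (X : PowerSeries ℂ) ^ (α * d + β))⁻¹)))
    (n : ℕ) (hn : 1 ≤ n) :
    ∑ k ∈ Finset.Icc 1 n, sInv n k * B k =
      ∑ d ∈ n.divisors, if d % α = β ∧ β < d then a ((d - β) / α) * γt (n / d) else 0 := by
  have hn0 : n ≠ 0 := by omega
  set Fs : ℕ → PowerSeries ℂ := fun N => ∑ d ∈ Finset.Icc 1 N,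
      a d • ((X : PowerSeries ℂ) ^ (α * d + β) * (1 - (X : PowerSeries ℂ) ^ (α * d + β))⁻¹)
    with hFs
  have hm1 : ∀ d, 1 ≤ d → 1 ≤ α * d + β := by
    intro d hd
    have : d ≤ α * d := Nat.le_mul_of_pos_left d hα
    omega
  have hF : ∀ N j, PowerSeries.coeff j (Fs N) =
      ∑ d ∈ Finset.Icc 1 N, if (α * d + β) ∣ j ∧ 1 ≤ j then a d else 0 := by
    intro N j
    rw [hFs, map_sum]
    refine Finset.sum_congr rfl fun d hd => ?_
    rw [PowerSeries.coeff_smul, coeff_geom_aux _ _ (hm1 d (Finset.mem_Icc.mp hd).1),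
      smul_eq_mul, mul_ite, mul_one, mul_zero]
  obtain ⟨F, hFdef⟩ : ∃ F : PowerSeries ℂ, F = Fs n := ⟨Fs n, rfl⟩
  have hBk : ∀ k ∈ Finset.Icc 1 n, B k = PowerSeries.coeff k (C * F) := by
    intro k hk
    obtain ⟨hk1, hkn⟩ := Finset.mem_Icc.mp hk
    rw [hB, PowerSeries.coeff_mul, PowerSeries.coeff_mul]
    refine Finset.sum_congr rfl fun p hp => ?_
    rw [Finset.HasAntidiagonal.mem_antidiagonal] at hp
    have hp2 : p.2 ≤ k := by omega
    congr 1
    rw [show (∑ d ∈ Finset.Icc 1 k,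
          a d • ((X : PowerSeries ℂ) ^ (α * d + β)
            * (1 - (X : PowerSeries ℂ) ^ (α * d + β))⁻¹)) = Fs k from rfl,
      hF, hFdef, hF]
    refine Finset.sum_subset (Finset.Icc_subset_Icc_right hkn) fun d hd hdk => ?_
    rw [Finset.mem_Icc] at hd
    rw [Finset.mem_Icc] at hdk
    rw [if_neg]
    rintro ⟨hdvd, hj⟩
    have h1 : α * d + β ≤ p.2 := Nat.le_of_dvd hj hdvd
    have h2 : d ≤ α * d := Nat.le_mul_of_pos_left d hα
    omega
  have hCF0 : PowerSeries.coeff 0 (C * F) = 0 := by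
    rw [PowerSeries.coeff_mul]
    rw [show Finset.HasAntidiagonal.antidiagonal 0 = {((0 : ℕ), (0 : ℕ))} from rfl]
    rw [Finset.sum_singleton, hFdef, hF]
    rw [Finset.sum_eq_zero, mul_zero]
    intro d _
    rw [if_neg]
    omega
  have key : ∀ D, 1 ≤ D → D ≤ n →
      (∑ k ∈ Finset.Icc 1 n,
        (if k ≤ D then PowerSeries.coeff (D - k) C⁻¹ else 0) * PowerSeries.coeff k (C * F))
        = PowerSeries.coeff D F := by
    intro D hD1 hDn
    have hCunit : (constantCoeff C) ≠ 0 := by rw [hC]; exact one_ne_zero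
    have hCC : C * C⁻¹ = 1 := PowerSeries.mul_inv_cancel C hCunit
    have hFeq : F = (C * F) * C⁻¹ := by
      rw [mul_comm C F, mul_assoc, hCC, mul_one]
    conv_rhs => rw [hFeq]
    rw [PowerSeries.coeff_mul, Finset.Nat.sum_antidiagonal_eq_sum_range_succ
      (fun i j => PowerSeries.coeff i (C * F) * PowerSeries.coeff j C⁻¹)]
    have hins : Finset.range (D + 1) = insert 0 (Finset.Icc 1 D) := by
      ext x
      simp only [Finset.mem_range, Finset.mem_insert, Finset.mem_Icc]
      omega
    rw [hins, Finset.sum_insert (by simp), hCF0, zero_mul, zero_add]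
    have hsub : ∑ k ∈ Finset.Icc 1 n,
        (if k ≤ D then PowerSeries.coeff (D - k) C⁻¹ else 0) * PowerSeries.coeff k (C * F)
        = ∑ k ∈ Finset.Icc 1 D,
        (if k ≤ D then PowerSeries.coeff (D - k) C⁻¹ else 0)
          * PowerSeries.coeff k (C * F) := by
      refine (Finset.sum_subset (Finset.Icc_subset_Icc_right hDn) ?_).symm
      intro k hk hkD
      rw [Finset.mem_Icc] at hk hkD
      rw [if_neg (by omega), zero_mul]
    rw [hsub]
    refine Finset.sum_congr rfl fun k hk => ?_
    rw [Finset.mem_Icc] at hk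
    rw [if_pos hk.2, mul_comm]
  obtain ⟨S, hS⟩ : ∃ S : ℕ → ℂ, ∀ δ, S δ =
      ∑ D ∈ n.divisors, if δ ∣ D then γ (n / D) else 0 :=
    ⟨_, fun _ => rfl⟩
  have step1 : ∑ k ∈ Finset.Icc 1 n, sInv n k * B k =
      ∑ D ∈ n.divisors, γ (n / D) * PowerSeries.coeff D F := by
    calc ∑ k ∈ Finset.Icc 1 n, sInv n k * B k
        = ∑ k ∈ Finset.Icc 1 n, ∑ D ∈ n.divisors,
            ((if k ≤ D then PowerSeries.coeff (D - k) C⁻¹ else 0) * γ (n / D))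
              * PowerSeries.coeff k (C * F) := by
          refine Finset.sum_congr rfl fun k hk => ?_
          rw [hsInv, hBk k hk, Finset.sum_mul]
      _ = ∑ D ∈ n.divisors, γ (n / D) *
            ∑ k ∈ Finset.Icc 1 n,
              (if k ≤ D then PowerSeries.coeff (D - k) C⁻¹ else 0)
                * PowerSeries.coeff k (C * F) := by
          rw [Finset.sum_comm]
          refine Finset.sum_congr rfl fun D _ => ?_
          rw [Finset.mul_sum]
          refine Finset.sum_congr rfl fun k _ => ?_
          ring
      _ = ∑ D ∈ n.divisors, γ (n / D) * PowerSeries.coeff D F := by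
          refine Finset.sum_congr rfl fun D hD => ?_
          have hD1 : 1 ≤ D := Nat.pos_of_mem_divisors hD
          have hDn : D ≤ n := Nat.le_of_dvd (by omega) (Nat.dvd_of_mem_divisors hD)
          rw [key D hD1 hDn]
  have step2 : ∑ D ∈ n.divisors, γ (n / D) * PowerSeries.coeff D F =
      ∑ d ∈ Finset.Icc 1 n, a d * S (α * d + β) := by
    calc ∑ D ∈ n.divisors, γ (n / D) * PowerSeries.coeff D F
        = ∑ D ∈ n.divisors, ∑ d ∈ Finset.Icc 1 n,
            (if (α * d + β) ∣ D then a d * γ (n / D) else 0) := by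
          refine Finset.sum_congr rfl fun D hD => ?_
          have hD1 : 1 ≤ D := Nat.pos_of_mem_divisors hD
          rw [hFdef, hF, Finset.mul_sum]
          refine Finset.sum_congr rfl fun d _ => ?_
          by_cases h : (α * d + β) ∣ D
          · rw [if_pos ⟨h, hD1⟩, if_pos h]; ring
          · rw [if_neg (fun hh => h hh.1), if_neg h, mul_zero]
      _ = ∑ d ∈ Finset.Icc 1 n, a d * S (α * d + β) := by
          rw [Finset.sum_comm]
          refine Finset.sum_congr rfl fun d _ => ?_
          rw [hS, Finset.mul_sum]
          refine Finset.sum_congr rfl fun D _ => ?_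
          by_cases h : (α * d + β) ∣ D
          · rw [if_pos h, if_pos h]
          · rw [if_neg h, if_neg h, mul_zero]
  have hSγt : ∀ δ, δ ∣ n → S δ = γt (n / δ) := by
    intro δ hδ
    have hδ0 : δ ≠ 0 := fun h => hn0 (by simpa [h] using hδ)
    rw [hγt, hS, ← Finset.sum_filter]
    refine Finset.sum_nbij' (fun D => n / D) (fun e => n / e) ?_ ?_ ?_ ?_ ?_
    · intro D hD
      rw [Finset.mem_filter, Nat.mem_divisors] at hD
      obtain ⟨⟨hDn, _⟩, hδD⟩ := hD
      have hD0 : D ≠ 0 := fun h => hn0 (by simpa [h] using hDn)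
      rw [Nat.mem_divisors]
      refine ⟨?_, ?_⟩
      · obtain ⟨t, ht⟩ := hδD
        obtain ⟨s, hs⟩ := hDn
        have h1 : n / D = s := by rw [hs, Nat.mul_div_cancel_left _ (Nat.pos_of_ne_zero hD0)]
        have h2 : n / δ = t * s := by
          rw [hs, ht, mul_assoc, Nat.mul_div_cancel_left _ (Nat.pos_of_ne_zero hδ0)]
        rw [h1, h2]
        exact dvd_mul_left s t
      · have hδle : δ ≤ n := Nat.le_of_dvd (by omega) hδ
        have := Nat.div_pos hδle (by omega)
        omega
    · intro e he
      rw [Nat.mem_divisors] at he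
      obtain ⟨hednδ, _⟩ := he
      have hen : e ∣ n := hednδ.trans (Nat.div_dvd_of_dvd hδ)
      have he0 : e ≠ 0 := fun h => hn0 (by simpa [h] using hen)
      rw [Finset.mem_filter, Nat.mem_divisors]
      refine ⟨⟨Nat.div_dvd_of_dvd hen, hn0⟩, ?_⟩
      rw [Nat.dvd_div_iff_mul_dvd hen]
      have := (Nat.dvd_div_iff_mul_dvd hδ).mp hednδ
      rwa [mul_comm] at this
    · intro D hD
      rw [Finset.mem_filter, Nat.mem_divisors] at hD
      exact Nat.div_div_self hD.1.1 hn0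
    · intro e he
      rw [Nat.mem_divisors] at he
      have hen : e ∣ n := he.1.trans (Nat.div_dvd_of_dvd hδ)
      exact Nat.div_div_self hen hn0
    · intro D hD
      rfl
  rw [step1, step2]
  have hvanish : ∀ d ∈ Finset.Icc 1 n, a d * S (α * d + β) =
      if (α * d + β) ∣ n then a d * S (α * d + β) else 0 := by
    intro d hd
    by_cases h : (α * d + β) ∣ n
    · rw [if_pos h]
    · rw [if_neg h, hS]
      have : (∑ D ∈ n.divisors, if (α * d + β) ∣ D then γ (n / D) else 0) = 0 := by
        refine Finset.sum_eq_zero fun D hD => ?_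
        rw [if_neg]
        intro hdvd
        exact h (hdvd.trans (Nat.dvd_of_mem_divisors hD))
      simp only [this, mul_zero]
  rw [Finset.sum_congr rfl hvanish, ← Finset.sum_filter, ← Finset.sum_filter]
  refine Finset.sum_nbij' (fun d => α * d + β) (fun δ => (δ - β) / α) ?_ ?_ ?_ ?_ ?_
  · intro d hd
    rw [Finset.mem_filter, Finset.mem_Icc] at hd
    obtain ⟨⟨hd1, hdn⟩, hdvd⟩ := hd
    rw [Finset.mem_filter, Nat.mem_divisors]
    refine ⟨⟨hdvd, hn0⟩, ?_, ?_⟩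
    · rw [Nat.mul_add_mod, Nat.mod_eq_of_lt hβ]
    · have : d ≤ α * d := Nat.le_mul_of_pos_left d hα
      omega
  · intro δ hδ
    rw [Finset.mem_filter, Nat.mem_divisors] at hδ
    obtain ⟨⟨hδn, _⟩, hmod, hβδ⟩ := hδ
    have hdm : α * (δ / α) + β = δ := by
      have := Nat.div_add_mod δ α
      omega
    have hq : (δ - β) / α = δ / α := by
      have h1 : δ - β = α * (δ / α) := by omega
      rw [h1, Nat.mul_div_cancel_left _ (by omega : 0 < α)]
    rw [Finset.mem_filter, Finset.mem_Icc, hq]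
    have hδle : δ ≤ n := Nat.le_of_dvd (by omega) hδn
    have h1 : 1 ≤ δ / α := by
      by_contra hcon
      have h0 : δ / α = 0 := Nat.lt_one_iff.mp (Nat.not_le.mp hcon)
      rw [h0, Nat.mul_zero] at hdm
      omega
    refine ⟨⟨h1, le_trans (Nat.div_le_self δ α) hδle⟩, ?_⟩
    rw [hdm]
    exact hδn
  · intro d hd
    rw [Nat.add_sub_cancel, Nat.mul_div_cancel_left d (by omega : 0 < α)]
  · intro δ hδ
    rw [Finset.mem_filter, Nat.mem_divisors] at hδ
    obtain ⟨⟨hδn, _⟩, hmod, hβδ⟩ := hδ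
    have hdm : α * (δ / α) + β = δ := by
      have := Nat.div_add_mod δ α
      omega
    have hq : (δ - β) / α = δ / α := by
      have h1 : δ - β = α * (δ / α) := by omega
      rw [h1, Nat.mul_div_cancel_left _ (by omega : 0 < α)]
    rw [hq, hdm]
  · intro d hd
    rw [Finset.mem_filter] at hd
    rw [Nat.add_sub_cancel, Nat.mul_div_cancel_left d (by omega : 0 < α),
      hSγt _ hd.2]
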